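/- For every real x > 0 with x ≠ 1 and every real p with 0 < p < 1, one has W_p(x,1) ≤ ((√x + 1)/2)² = K(√x)·√x ≤ K(√x)·L(x,1), where K is the Kantorovich constant. -/

import Mathlib

open Real

private lemma convexOn_sinh' : ConvexOn ℝ (Set.Ici (0:ℝ)) Real.sinh := by
  apply convexOn_of_deriv2_nonneg (convex_Ici 0) Real.continuous_sinh.continuousOn
  · exact fun x _ => Real.differentiable_sinh.differentiableAt.differentiableWithinAt
  · rw [Real.deriv_sinh]
    exact fun x _ => Real.differentiable_cosh.differentiableAt.differentiableWithinAt
  · intro x hx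
    simp only [Function.iterate_succ, Function.iterate_zero, Function.comp_apply, id_eq,
      Real.deriv_sinh, Real.deriv_cosh]
    have : (0:ℝ) < x := by simpa [interior_Ici] using hx
    exact (Real.sinh_pos_iff.2 this).le

private lemma sinh_mul_le (q w : ℝ) (hq0 : 0 ≤ q) (hq1 : q ≤ 1) (hw : 0 ≤ w) :
    Real.sinh (q * w) ≤ q * Real.sinh w := by
  have h := convexOn_sinh'.2 (Set.mem_Ici.2 (le_refl (0:ℝ))) (Set.mem_Ici.2 hw)
    (by linarith : (0:ℝ) ≤ 1 - q) hq0 (by ring : (1 - q) + q = 1)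
  simpa using h

private lemma sinh_sq_mul_le (q u : ℝ) (hq : |q| ≤ 1) :
    Real.sinh (q * u) ^ 2 ≤ q ^ 2 * Real.sinh u ^ 2 := by
  have h1 : |Real.sinh (q * u)| = Real.sinh (|q| * |u|) := by
    rw [Real.abs_sinh, abs_mul]
  have h2 : Real.sinh (|q| * |u|) ≤ |q| * Real.sinh |u| :=
    sinh_mul_le _ _ (abs_nonneg q) hq (abs_nonneg u)
  have h3 : (0:ℝ) ≤ Real.sinh |u| := Real.sinh_nonneg_iff.2 (abs_nonneg u)
  have h4 : Real.sinh (q*u) ^ 2 = Real.sinh (|q| * |u|) ^ 2 := by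
    rw [← h1, sq_abs]
  rw [h4]
  calc Real.sinh (|q| * |u|) ^ 2 ≤ (|q| * Real.sinh |u|) ^ 2 := by
        apply sq_le_sq' _ h2
        have := Real.sinh_nonneg_iff.2 (mul_nonneg (abs_nonneg q) (abs_nonneg u))
        nlinarith [mul_nonneg (abs_nonneg q) h3]
    _ = q ^ 2 * Real.sinh u ^ 2 := by
        rw [mul_pow, sq_abs, ← Real.abs_sinh, sq_abs]

/-- key inequality: 4 p (1-p) sinh u ^ 2 ≤ sinh (2pu) * sinh (2(1-p)u) -/
private lemma key_sinh (p u : ℝ) (hp0 : 0 < p) (hp1 : p < 1) :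
    4 * p * (1 - p) * Real.sinh u ^ 2 ≤
      Real.sinh (2 * p * u) * Real.sinh (2 * (1 - p) * u) := by
  have prod : Real.sinh (2*p*u) * Real.sinh (2*(1-p)*u)
      = Real.sinh u ^ 2 - Real.sinh ((2*p-1) * u) ^ 2 := by
    have hA : Real.cosh (2*p*u + 2*(1-p)*u) =
        Real.cosh (2*p*u) * Real.cosh (2*(1-p)*u) + Real.sinh (2*p*u) * Real.sinh (2*(1-p)*u) :=
      Real.cosh_add _ _
    have hB : Real.cosh (2*p*u - 2*(1-p)*u) =
        Real.cosh (2*p*u) * Real.cosh (2*(1-p)*u) - Real.sinh (2*p*u) * Real.sinh (2*(1-p)*u) :=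
      Real.cosh_sub _ _
    have e1 : 2*p*u + 2*(1-p)*u = 2 * u := by ring
    have e2 : 2*p*u - 2*(1-p)*u = 2 * ((2*p-1)*u) := by ring
    rw [e1] at hA; rw [e2] at hB
    have c1 : Real.cosh (2*u) = Real.cosh u ^ 2 + Real.sinh u ^ 2 := Real.cosh_two_mul u
    have c2 : Real.cosh (2*((2*p-1)*u)) =
        Real.cosh ((2*p-1)*u) ^ 2 + Real.sinh ((2*p-1)*u) ^ 2 := Real.cosh_two_mul _
    have d1 : Real.cosh u ^ 2 = Real.sinh u ^ 2 + 1 := Real.cosh_sq u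
    have d2 : Real.cosh ((2*p-1)*u) ^ 2 = Real.sinh ((2*p-1)*u) ^ 2 + 1 := Real.cosh_sq _
    nlinarith [hA, hB, c1, c2, d1, d2]
  rw [prod]
  have hq : |2*p - 1| ≤ 1 := by rw [abs_le]; constructor <;> linarith
  have := sinh_sq_mul_le (2*p-1) u hq
  nlinarith [this]

theorem wyd_le_kantorovich_sqrt_log_mean (x p : ℝ) (hx : 0 < x) (hx1 : x ≠ 1)
    (hp0 : 0 < p) (hp1 : p < 1) :
    p * (1 - p) * (x - 1) ^ 2 / ((x ^ p - 1) * (x ^ (1 - p) - 1)) ≤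
        ((Real.sqrt x + 1) / 2) ^ 2 ∧
      ((Real.sqrt x + 1) / 2) ^ 2 =
        ((Real.sqrt x + 1) ^ 2 / (4 * Real.sqrt x)) * Real.sqrt x ∧
      ((Real.sqrt x + 1) ^ 2 / (4 * Real.sqrt x)) * Real.sqrt x ≤
        ((Real.sqrt x + 1) ^ 2 / (4 * Real.sqrt x)) * ((x - 1) / Real.log x) := by
  have hsx : 0 < Real.sqrt x := Real.sqrt_pos.2 hx
  set u : ℝ := Real.log x / 4 with hu
  have hu0 : u ≠ 0 := by
    simp only [hu, div_ne_zero_iff]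
    exact ⟨Real.log_ne_zero_of_pos_of_ne_one hx hx1, by norm_num⟩
  have hxe : x = Real.exp (4 * u) := by
    rw [hu]; rw [mul_div_cancel₀ _ (by norm_num : (4:ℝ) ≠ 0)]
    exact (Real.exp_log hx).symm
  have hsxe : Real.sqrt x = Real.exp (2 * u) := by
    rw [hxe, ← Real.exp_half]; ring_nf
  have hxp : x ^ p = Real.exp (4 * p * u) := by
    rw [Real.rpow_def_of_pos hx, hu]; ring_nf
  have hxp' : x ^ (1 - p) = Real.exp (4 * (1 - p) * u) := by
    rw [Real.rpow_def_of_pos hx, hu]; ring_nf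
  -- factorizations via sinh/cosh
  have fac : ∀ t : ℝ, Real.exp (2 * t) - 1 = 2 * Real.exp t * Real.sinh t := by
    intro t
    have h2 : Real.exp (2 * t) = Real.exp t * Real.exp t := by
      rw [← Real.exp_add]; ring_nf
    have h := (Real.exp_pos t).ne'
    rw [Real.sinh_eq, Real.exp_neg, h2]
    field_simp
  have fx : x - 1 = 2 * Real.exp (2 * u) * Real.sinh (2 * u) := by
    rw [hxe, ← fac (2*u)]; ring_nf
  have fxp : x ^ p - 1 = 2 * Real.exp (2 * p * u) * Real.sinh (2 * p * u) := by
    rw [hxp, ← fac (2*p*u)]; ring_nf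
  have fxp' : x ^ (1-p) - 1 = 2 * Real.exp (2 * (1-p) * u) * Real.sinh (2 * (1-p) * u) := by
    rw [hxp', ← fac (2*(1-p)*u)]; ring_nf
  have fsx : Real.sqrt x + 1 = 2 * Real.exp u * Real.cosh u := by
    have h2 : Real.exp (2 * u) = Real.exp u * Real.exp u := by
      rw [← Real.exp_add]; ring_nf
    have h := (Real.exp_pos u).ne'
    rw [hsxe, Real.cosh_eq, Real.exp_neg, h2]
    field_simp
  -- positivity of denominator
  have hsinh2 : Real.sinh u ^ 2 > 0 := by
    have : Real.sinh u ≠ 0 := by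
      intro h; exact hu0 (Real.sinh_injective (by simpa using h))
    positivity
  have hkey := key_sinh p u hp0 hp1
  have hDpos : 0 < Real.sinh (2*p*u) * Real.sinh (2*(1-p)*u) := by
    have h1p : (0:ℝ) < 1 - p := by linarith
    have hpp : 0 < 4 * p * (1 - p) * Real.sinh u ^ 2 :=
      mul_pos (mul_pos (by linarith) h1p) hsinh2
    linarith [hkey]
  have hD : 0 < (x ^ p - 1) * (x ^ (1 - p) - 1) := by
    rw [fxp, fxp']
    have e : (2 * Real.exp (2*p*u) * Real.sinh (2*p*u)) *
        (2 * Real.exp (2*(1-p)*u) * Real.sinh (2*(1-p)*u)) =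
        (4 * (Real.exp (2*p*u) * Real.exp (2*(1-p)*u))) *
          (Real.sinh (2*p*u) * Real.sinh (2*(1-p)*u)) := by ring
    rw [e]
    exact mul_pos (by positivity) hDpos
  refine ⟨?_, ?_, ?_⟩
  · rw [div_le_iff₀ hD]
    have hchu : 0 < Real.cosh u := Real.cosh_pos u
    have hs2u : Real.sinh (2*u) = 2 * Real.sinh u * Real.cosh u := Real.sinh_two_mul u
    rw [fx, fxp, fxp', fsx]
    have he1 := Real.exp_pos u
    have he2 := Real.exp_pos (2*u)
    have heq : Real.exp (2*p*u) * Real.exp (2*(1-p)*u) = Real.exp (2*u) := by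
      rw [← Real.exp_add]; ring_nf
    have hee : Real.exp u * Real.exp u = Real.exp (2*u) := by
      rw [← Real.exp_add]; ring_nf
    -- reduce to key_sinh
    have target : p * (1-p) * (2 * Real.exp (2*u) * Real.sinh (2*u))^2 =
        Real.exp (2*u) * Real.exp (2*u) * (4 * p * (1-p) * Real.sinh u ^ 2) *
          (4 * Real.cosh u ^ 2) := by
      rw [hs2u]; ring
    calc p * (1 - p) * (2 * Real.exp (2*u) * Real.sinh (2*u)) ^ 2
        = Real.exp (2*u) * Real.exp (2*u) * (4 * p * (1-p) * Real.sinh u ^ 2) *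
          (4 * Real.cosh u ^ 2) := target
      _ ≤ Real.exp (2*u) * Real.exp (2*u) *
          (Real.sinh (2*p*u) * Real.sinh (2*(1-p)*u)) * (4 * Real.cosh u ^ 2) := by
          apply mul_le_mul_of_nonneg_right _ (by positivity)
          apply mul_le_mul_of_nonneg_left hkey (by positivity)
      _ = (2 * Real.exp u * Real.cosh u / 2) ^ 2 *
          (2 * Real.exp (2*p*u) * Real.sinh (2*p*u) *
            (2 * Real.exp (2*(1-p)*u) * Real.sinh (2*(1-p)*u))) := by
          rw [div_pow]
          have expand : (2 * Real.exp u * Real.cosh u) ^ 2 / 2 ^ 2 *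
              (2 * Real.exp (2*p*u) * Real.sinh (2*p*u) *
                (2 * Real.exp (2*(1-p)*u) * Real.sinh (2*(1-p)*u))) =
              (Real.exp u * Real.exp u) * (Real.exp (2*p*u) * Real.exp (2*(1-p)*u)) *
                (Real.sinh (2*p*u) * Real.sinh (2*(1-p)*u)) * (4 * Real.cosh u ^ 2) := by
            ring
          rw [expand, hee, heq]
  · field_simp; ring
  · apply mul_le_mul_of_nonneg_left _ (by positivity)
    -- √x ≤ (x-1)/log x
    have hlog : Real.log x = 4 * u := by rw [hu]; ring
    rw [hsxe, fx, hlog]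
    rcases lt_or_gt_of_ne hu0 with hneg | hpos
    · have h2u : 2 * u < 0 := by linarith
      have hs : Real.sinh (2*u) < 2*u := Real.sinh_lt_self_iff.2 h2u
      rw [le_div_iff_of_neg (by linarith : 4 * u < 0)]
      have he := Real.exp_pos (2*u)
      nlinarith [hs, he]
    · have h2u : 0 < 2 * u := by linarith
      have hs : 2*u < Real.sinh (2*u) := Real.self_lt_sinh_iff.2 h2u
      rw [le_div_iff₀ (by linarith : 0 < 4 * u)]
      have he := Real.exp_pos (2*u)
      nlinarith [hs, he]
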